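/- Let A ∈ ℝ^{m×n}, and suppose (x̂, d̂) is strictly complementary and satisfies the ℓ¹ source condition Ax̂ = b̂, d̂ ∈ range A* ∩ Sign x̂. Let F_δ(x) := (1/2)‖Ax − b_δ‖₂² + α_δ‖x‖₁ on ℝⁿ for some α_δ ∈ (0, 1/2) and b_δ ∈ ℝ^m. Then F_δ is (A, α_δ)-strongly locally subdifferentiable at x̂ for x̂* := A*(Ax̂ − b_δ) + α_δ d̂ ∈ ∂F_δ(x̂) with respect to the set X̂ of ℓ¹-norm-minimising solutions of Ax = b̂, in some open neighbourhood U of x̂, where both the factor γ of strong local subdifferentiability and U are independent of δ. -/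

import Mathlib

set_option maxHeartbeats 4000000

open scoped RealInnerProductSpace
open Metric

private lemma abs_apply_le_norm'' {n : ℕ} (x : EuclideanSpace ℝ (Fin n)) (k : Fin n) :
    |x k| ≤ ‖x‖ := by
  have h : ‖x k‖ ^ 2 ≤ ∑ i, ‖x i‖ ^ 2 :=
    Finset.single_le_sum (f := fun i => ‖x i‖ ^ 2) (fun i _ => sq_nonneg _) (Finset.mem_univ k)
  have h2 : |x k| = Real.sqrt (‖x k‖ ^ 2) := by
    rw [Real.sqrt_sq (norm_nonneg _), Real.norm_eq_abs]
  rw [h2, EuclideanSpace.norm_eq]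
  exact Real.sqrt_le_sqrt h

private lemma exists_dist_bound'' {E F : Type*} [NormedAddCommGroup E] [InnerProductSpace ℝ E]
    [FiniteDimensional ℝ E] [NormedAddCommGroup F] [NormedSpace ℝ F]
    (L : E →L[ℝ] F) :
    ∃ C : ℝ, 0 < C ∧ ∀ u ∈ (LinearMap.ker L.toLinearMap)ᗮ, ‖u‖ ≤ C * ‖L u‖ := by
  set K := LinearMap.ker L.toLinearMap
  set f : Kᗮ →ₗ[ℝ] F := L.toLinearMap.comp Kᗮ.subtype with hf
  have hker : LinearMap.ker f = ⊥ := by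
    rw [Submodule.eq_bot_iff]
    rintro ⟨x, hx⟩ hfx
    have hxK : x ∈ K := by simpa [f, K, LinearMap.mem_ker] using hfx
    have hx0 : x = 0 := by
      have := hx x hxK
      rwa [inner_self_eq_zero] at this
    exact Subtype.ext hx0
  obtain ⟨c, hc, hlip⟩ := f.exists_antilipschitzWith hker
  refine ⟨c, hc, fun u hu => ?_⟩
  have h := hlip.le_mul_dist ⟨u, hu⟩ 0
  simpa [f, dist_eq_norm] using h

theorem lasso_semistrong_subdifferentiability
    {m n : ℕ}
    (A : EuclideanSpace ℝ (Fin n) →L[ℝ] EuclideanSpace ℝ (Fin m))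
    (bhat : EuclideanSpace ℝ (Fin m))
    (xhat dhat : EuclideanSpace ℝ (Fin n))
    (hsol : A xhat = bhat)
    (hrange : ∃ w : EuclideanSpace ℝ (Fin m), dhat = ContinuousLinearMap.adjoint A w)
    (hsign : ∀ k : Fin n,
      (xhat k < 0 → dhat k = -1) ∧ (0 < xhat k → dhat k = 1) ∧
      (xhat k = 0 → |dhat k| ≤ 1))
    (hstrict : ∀ k : Fin n, xhat k = 0 → |dhat k| < 1)
    -- the set X̂ of ℓ¹-norm-minimising solutions of A z = b̂
    (Xhat : Set (EuclideanSpace ℝ (Fin n)))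
    (hXhat : Xhat = {z : EuclideanSpace ℝ (Fin n) | A z = bhat ∧
      ∀ v : EuclideanSpace ℝ (Fin n), A v = bhat →
        ∑ k, |z k| ≤ ∑ k, |v k|}) :
    ∃ (U : Set (EuclideanSpace ℝ (Fin n))) (γ : ℝ),
      IsOpen U ∧ xhat ∈ U ∧ 0 < γ ∧
      ∀ αδ : ℝ, 0 < αδ → αδ < 2⁻¹ → ∀ bδ : EuclideanSpace ℝ (Fin m), ∀ z ∈ U,
        (2⁻¹ * ‖A xhat - bδ‖ ^ 2 + αδ * ∑ k, |xhat k|)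
            + ⟪ContinuousLinearMap.adjoint A (A xhat - bδ) + αδ • dhat, z - xhat⟫
            + γ * ‖A (z - xhat)‖ ^ 2 + γ * αδ * infDist z Xhat ^ 2
          ≤ 2⁻¹ * ‖A z - bδ‖ ^ 2 + αδ * ∑ k, |z k| := by
  classical
  obtain ⟨w, hw⟩ := hrange
  -- every component of dhat is at most 1 in absolute value
  have hd1 : ∀ k, |dhat k| ≤ 1 := by
    intro k
    rcases lt_trichotomy (xhat k) 0 with h | h | h
    · rw [(hsign k).1 h]; norm_num
    · exact (hsign k).2.2 h
    · rw [(hsign k).2.1 h]; norm_num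
  -- strict complementarity gap ε
  obtain ⟨ε, hε0, hεk⟩ : ∃ ε : ℝ, 0 < ε ∧ ∀ k, xhat k = 0 → ε ≤ 1 - |dhat k| := by
    by_cases hZ : (Finset.univ.filter fun k => xhat k = 0).Nonempty
    · refine ⟨(Finset.univ.filter fun k => xhat k = 0).inf' hZ (fun k => 1 - |dhat k|), ?_, ?_⟩
      · rw [Finset.lt_inf'_iff]
        intro k hk
        have := hstrict k (by simpa using hk)
        linarith
      · intro k hk
        exact Finset.inf'_le _ (by simp [hk])
    · exact ⟨1, one_pos, fun k hk => absurd ⟨k, by simp [hk]⟩ hZ⟩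
  -- minimal nonzero magnitude ρ
  obtain ⟨ρ, hρ0, hρk⟩ : ∃ ρ : ℝ, 0 < ρ ∧ ∀ k, xhat k ≠ 0 → ρ ≤ |xhat k| := by
    by_cases hS : (Finset.univ.filter fun k => xhat k ≠ 0).Nonempty
    · refine ⟨(Finset.univ.filter fun k => xhat k ≠ 0).inf' hS (fun k => |xhat k|), ?_, ?_⟩
      · rw [Finset.lt_inf'_iff]
        intro k hk
        exact abs_pos.mpr (by simpa using hk)
      · intro k hk
        exact Finset.inf'_le _ (by simp [hk])
    · exact ⟨1, one_pos, fun k hk => absurd ⟨k, by simp [hk]⟩ hS⟩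
  -- the masking operator on the zero coordinates of xhat
  obtain ⟨Q, hQapp⟩ : ∃ Q : EuclideanSpace ℝ (Fin n) →L[ℝ] EuclideanSpace ℝ (Fin n),
      ∀ (v : EuclideanSpace ℝ (Fin n)) (k : Fin n),
        Q v k = if xhat k = 0 then v k else 0 := by
    refine ⟨LinearMap.toContinuousLinearMap
      { toFun := fun v => WithLp.toLp 2 (fun k => if xhat k = 0 then v k else 0)
        map_add' := by
          intro a b; ext k; by_cases h : xhat k = 0 <;> simp [h, PiLp.add_apply]
        map_smul' := by
          intro c a; ext k; by_cases h : xhat k = 0 <;> simp [h, PiLp.smul_apply] },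
      fun v k => rfl⟩
  set L : EuclideanSpace ℝ (Fin n) →L[ℝ]
      (EuclideanSpace ℝ (Fin m)) × (EuclideanSpace ℝ (Fin n)) := A.prod Q with hLdef
  have hLapp : ∀ v, L v = (A v, Q v) := fun v => rfl
  set K : Submodule ℝ (EuclideanSpace ℝ (Fin n)) := LinearMap.ker L.toLinearMap with hKdef
  obtain ⟨C, hC0, hC⟩ := exists_dist_bound'' L
  -- choice of γ and r
  set γ : ℝ := (2 + C ^ 2)⁻¹ with hγdef
  have hγ0 : 0 < γ := by positivity
  have hγsum : 2 * γ + γ * C ^ 2 = 1 := by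
    rw [hγdef]; field_simp
  set r : ℝ := min (ρ / (2 * (1 + C * ‖L‖))) (ε / (γ * C ^ 2 + 1)) with hrdef
  have hLnorm0 : (0:ℝ) < 1 + C * ‖L‖ := by positivity
  have hr0 : 0 < r := lt_min (by positivity) (by positivity)
  have hrρ : (1 + C * ‖L‖) * r < ρ := by
    have h1 : r ≤ ρ / (2 * (1 + C * ‖L‖)) := min_le_left _ _
    have h2 : (1 + C * ‖L‖) * (ρ / (2 * (1 + C * ‖L‖))) = ρ / 2 := by
      field_simp
    calc (1 + C * ‖L‖) * r ≤ (1 + C * ‖L‖) * (ρ / (2 * (1 + C * ‖L‖))) :=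
          mul_le_mul_of_nonneg_left h1 hLnorm0.le
      _ = ρ / 2 := h2
      _ < ρ := div_lt_self hρ0 one_lt_two
  have hrε : γ * C ^ 2 * r ≤ ε := by
    have h1 : r ≤ ε / (γ * C ^ 2 + 1) := min_le_right _ _
    have h3 : (0:ℝ) < γ * C ^ 2 + 1 := by positivity
    rw [le_div_iff₀ h3] at h1
    have h4 : r * (γ * C ^ 2 + 1) = γ * C ^ 2 * r + r := by ring
    linarith
  refine ⟨ball xhat r, γ, isOpen_ball, mem_ball_self hr0, hγ0, ?_⟩
  intro αδ hα hα2 bδ z hz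
  set v : EuclideanSpace ℝ (Fin n) := z - xhat with hvdef
  have hvn : ‖v‖ < r := by rw [mem_ball, dist_eq_norm] at hz; exact hz
  have hvk : ∀ k, v k = z k - xhat k := fun k => rfl
  -- projection onto the kernel
  obtain ⟨q, hqK, hvq⟩ : ∃ q : EuclideanSpace ℝ (Fin n), q ∈ K ∧ v - q ∈ Kᗮ :=
    ⟨K.starProjection v,
      K.starProjection_apply_mem v, K.sub_starProjection_mem_orthogonal v⟩
  have hLq : L q = 0 := LinearMap.mem_ker.mp hqK
  have hAq : A q = 0 := by
    have := congrArg Prod.fst hLq; simpa [hLapp] using this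
  have hQq : Q q = 0 := by
    have := congrArg Prod.snd hLq; simpa [hLapp] using this
  have hqz : ∀ k, xhat k = 0 → q k = 0 := by
    intro k hk
    have h1 : Q q k = 0 := by rw [hQq]; rfl
    rwa [hQapp, if_pos hk] at h1
  have hvqb : ‖v - q‖ ≤ C * ‖L v‖ := by
    have h1 := hC (v - q) hvq
    have h2 : L (v - q) = L v := by rw [map_sub, hLq, sub_zero]
    rwa [h2] at h1
  have hqn : ‖q‖ < ρ := by
    have h1 : ‖q‖ ≤ ‖v‖ + ‖v - q‖ := by
      have h0 : ‖q‖ = ‖v - (v - q)‖ := by congr 1; abel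
      rw [h0]
      exact norm_sub_le v (v - q)
    have h2 : ‖L v‖ ≤ ‖L‖ * ‖v‖ := L.le_opNorm v
    have h3 : C * ‖L v‖ ≤ C * (‖L‖ * ‖v‖) := by
      exact mul_le_mul_of_nonneg_left h2 hC0.le
    have h4 : (1 + C * ‖L‖) * ‖v‖ < (1 + C * ‖L‖) * r := by
      exact mul_lt_mul_of_pos_left hvn hLnorm0
    have h5 : C * (‖L‖ * ‖v‖) + ‖v‖ = (1 + C * ‖L‖) * ‖v‖ := by ring
    linarith
  -- the comparison point p
  set p : EuclideanSpace ℝ (Fin n) := xhat + q with hpdef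
  have hpk : ∀ k, p k = xhat k + q k := fun k => rfl
  have hAp : A p = bhat := by rw [hpdef, map_add, hAq, hsol, add_zero]
  -- lower bound for the ℓ¹ norm of any solution
  have key : ∀ y : EuclideanSpace ℝ (Fin n), A y = bhat → ⟪w, bhat⟫ ≤ ∑ k, |y k| := by
    intro y hy
    have h1 : ⟪w, bhat⟫ = ∑ k, dhat k * y k := by
      rw [← hy, ← ContinuousLinearMap.adjoint_inner_left A y w, ← hw]
      simp [PiLp.inner_apply, RCLike.inner_apply, conj_trivial]
      exact Finset.sum_congr rfl fun _ _ => mul_comm _ _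
    rw [h1]
    apply Finset.sum_le_sum
    intro k _
    calc dhat k * y k ≤ |dhat k * y k| := le_abs_self _
      _ = |dhat k| * |y k| := abs_mul _ _
      _ ≤ 1 * |y k| := mul_le_mul_of_nonneg_right (hd1 k) (abs_nonneg _)
      _ = |y k| := one_mul _
  have hpsum : ∑ k, |p k| = ⟪w, bhat⟫ := by
    have h1 : ∀ k, |p k| = dhat k * p k := by
      intro k
      rcases lt_trichotomy (xhat k) 0 with h | h | h
      · have hd := (hsign k).1 h
        have hq1 : |q k| ≤ ‖q‖ := abs_apply_le_norm'' q k
        have hq2 : ρ ≤ |xhat k| := hρk k (ne_of_lt h)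
        have hxa : |xhat k| = -xhat k := abs_of_neg h
        have hp0 : p k < 0 := by
          rw [hpk]
          have := le_abs_self (q k)
          linarith
        rw [abs_of_neg hp0, hd]; ring
      · have hp0 : p k = 0 := by rw [hpk, h, hqz k h, add_zero]
        rw [hp0]; simp
      · have hd := (hsign k).2.1 h
        have hq1 : |q k| ≤ ‖q‖ := abs_apply_le_norm'' q k
        have hq2 : ρ ≤ |xhat k| := hρk k (ne_of_gt h)
        have hxa : |xhat k| = xhat k := abs_of_pos h
        have hp0 : 0 < p k := by
          rw [hpk]
          have := neg_abs_le (q k)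
          linarith
        rw [abs_of_pos hp0, hd]; ring
    rw [Finset.sum_congr rfl fun k _ => h1 k]
    have h2 : ∑ k, dhat k * p k = ⟪dhat, p⟫ := by
      simp [PiLp.inner_apply, RCLike.inner_apply, conj_trivial]
      exact Finset.sum_congr rfl fun _ _ => mul_comm _ _
    rw [h2, hw, ContinuousLinearMap.adjoint_inner_left, hAp]
  have hpX : p ∈ Xhat := by
    rw [hXhat]
    refine ⟨hAp, fun y hy => ?_⟩
    rw [hpsum]
    exact key y hy
  -- distance bound
  have hdist : infDist z Xhat ≤ C * ‖L v‖ := by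
    have h1 : infDist z Xhat ≤ dist z p := infDist_le_dist_of_mem hpX
    have h2 : dist z p = ‖v - q‖ := by
      rw [dist_eq_norm]
      congr 1
      rw [hpdef, hvdef]; abel
    linarith [hvqb]
  -- the ℓ¹ slack T
  set T : ℝ := (∑ k, |z k|) - (∑ k, |xhat k|) - ⟪dhat, v⟫ with hTdef
  have hinner_dv : ⟪dhat, v⟫ = ∑ k, dhat k * (z k - xhat k) := by
    simp [PiLp.inner_apply, RCLike.inner_apply, conj_trivial, hvk]
    exact Finset.sum_congr rfl fun _ _ => mul_comm _ _
  have hTsum : T = ∑ k, (|z k| - |xhat k| - dhat k * (z k - xhat k)) := by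
    rw [hTdef, hinner_dv, Finset.sum_sub_distrib, Finset.sum_sub_distrib]
  have hs0 : ∀ k, 0 ≤ |z k| - |xhat k| - dhat k * (z k - xhat k) := by
    intro k
    rcases lt_trichotomy (xhat k) 0 with h | h | h
    · rw [(hsign k).1 h, abs_of_neg h]
      have := neg_abs_le (z k)
      linarith
    · rw [h]
      have h1 : dhat k * z k ≤ |dhat k| * |z k| := by
        calc dhat k * z k ≤ |dhat k * z k| := le_abs_self _
          _ = |dhat k| * |z k| := abs_mul _ _
      have h2 : |dhat k| * |z k| ≤ 1 * |z k| :=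
        mul_le_mul_of_nonneg_right (hd1 k) (abs_nonneg _)
      simp only [abs_zero]
      linarith
    · rw [(hsign k).2.1 h, abs_of_pos h]
      have := le_abs_self (z k)
      linarith
  have hT0 : 0 ≤ T := by
    rw [hTsum]; exact Finset.sum_nonneg fun k _ => hs0 k
  -- slack controls zero coordinates
  set Z : Finset (Fin n) := Finset.univ.filter fun k => xhat k = 0 with hZdef
  set SZ : ℝ := ∑ k ∈ Z, |z k| with hSZdef
  set P : ℝ := ∑ k ∈ Z, (z k) ^ 2 with hPdef
  have hSZ0 : 0 ≤ SZ := Finset.sum_nonneg fun k _ => abs_nonneg _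
  have hP0 : 0 ≤ P := Finset.sum_nonneg fun k _ => sq_nonneg _
  have hεSZ : ε * SZ ≤ T := by
    have h1 : ∀ k ∈ Z, ε * |z k| ≤ |z k| - |xhat k| - dhat k * (z k - xhat k) := by
      intro k hk
      have hk0 : xhat k = 0 := by simpa [hZdef] using hk
      rw [hk0]
      have h2 : dhat k * z k ≤ |dhat k| * |z k| := by
        calc dhat k * z k ≤ |dhat k * z k| := le_abs_self _
          _ = |dhat k| * |z k| := abs_mul _ _
      have h3 : ε * |z k| ≤ (1 - |dhat k|) * |z k| :=
        mul_le_mul_of_nonneg_right (hεk k hk0) (abs_nonneg _)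
      have h4 : (1 - |dhat k|) * |z k| = |z k| - |dhat k| * |z k| := by ring
      simp only [abs_zero]
      linarith
    calc ε * SZ = ∑ k ∈ Z, ε * |z k| := by rw [hSZdef, Finset.mul_sum]
      _ ≤ ∑ k ∈ Z, (|z k| - |xhat k| - dhat k * (z k - xhat k)) := Finset.sum_le_sum h1
      _ ≤ ∑ k, (|z k| - |xhat k| - dhat k * (z k - xhat k)) :=
          Finset.sum_le_sum_of_subset_of_nonneg (Finset.filter_subset _ _)
            (fun k _ _ => hs0 k)
      _ = T := hTsum.symm
  have hPr : P ≤ r * SZ := by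
    rw [hPdef, hSZdef, Finset.mul_sum]
    apply Finset.sum_le_sum
    intro k hk
    have hk0 : xhat k = 0 := by simpa [hZdef] using hk
    have h1 : |z k| ≤ r := by
      have h2 : |v k| ≤ ‖v‖ := abs_apply_le_norm'' v k
      rw [hvk, hk0, sub_zero] at h2
      linarith
    calc (z k) ^ 2 = |z k| * |z k| := by rw [← abs_mul, abs_mul_self]; ring
      _ ≤ r * |z k| := mul_le_mul_of_nonneg_right h1 (abs_nonneg _)
  -- norm of L v
  have hQv : ‖Q v‖ ^ 2 = P := by
    have h1 : ‖Q v‖ ^ 2 = ∑ k, Q v k * Q v k := by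
      rw [← real_inner_self_eq_norm_sq]
      simp only [PiLp.inner_apply, RCLike.inner_apply, conj_trivial]
    rw [h1, hPdef]
    rw [← Finset.sum_filter_add_sum_filter_not Finset.univ (fun k => xhat k = 0)
      (fun k => Q v k * Q v k)]
    have e1 : ∑ k ∈ Finset.univ.filter (fun k => xhat k = 0), Q v k * Q v k
        = ∑ k ∈ Z, (z k) ^ 2 := by
      rw [← hZdef]
      apply Finset.sum_congr rfl
      intro k hk
      have hk0 : xhat k = 0 := by simpa [hZdef] using hk
      rw [hQapp, if_pos hk0, hvk, hk0, sub_zero, sq]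
    have e2 : ∑ k ∈ Finset.univ.filter (fun k => ¬ xhat k = 0),
        Q v k * Q v k = 0 := by
      apply Finset.sum_eq_zero
      intro k hk
      have hk0 : ¬ xhat k = 0 := by simpa using hk
      rw [hQapp, if_neg hk0, mul_zero]
    rw [e1, e2, add_zero]
  have hLv2 : ‖L v‖ ^ 2 ≤ ‖A v‖ ^ 2 + P := by
    rw [← hQv, hLapp, Prod.norm_def]
    rcases le_total ‖A v‖ ‖Q v‖ with h | h
    · rw [max_eq_right h]; linarith [sq_nonneg ‖A v‖]
    · rw [max_eq_left h]; linarith [sq_nonneg ‖Q v‖]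
  -- square the distance bound
  have hdist2 : infDist z Xhat ^ 2 ≤ C ^ 2 * (‖A v‖ ^ 2 + P) := by
    have h1 : infDist z Xhat ^ 2 ≤ (C * ‖L v‖) ^ 2 :=
      pow_le_pow_left₀ infDist_nonneg hdist 2
    calc infDist z Xhat ^ 2 ≤ (C * ‖L v‖) ^ 2 := h1
      _ = C ^ 2 * ‖L v‖ ^ 2 := by ring
      _ ≤ C ^ 2 * (‖A v‖ ^ 2 + P) := mul_le_mul_of_nonneg_left hLv2 (sq_nonneg C)
  -- slack controls P
  have hPT : γ * C ^ 2 * P ≤ T := by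
    have hεP : ε * P ≤ r * (ε * SZ) := by
      have := mul_le_mul_of_nonneg_left hPr hε0.le
      have he : ε * (r * SZ) = r * (ε * SZ) := by ring
      linarith
    have h1 : γ * C ^ 2 * (ε * P) ≤ γ * C ^ 2 * (r * (ε * SZ)) :=
      mul_le_mul_of_nonneg_left hεP (by positivity)
    have h3 : γ * C ^ 2 * r * (ε * SZ) ≤ ε * (ε * SZ) :=
      mul_le_mul_of_nonneg_right hrε (by positivity)
    have h4 : ε * (ε * SZ) ≤ ε * T := mul_le_mul_of_nonneg_left hεSZ hε0.le
    have h6 : γ * C ^ 2 * (r * (ε * SZ)) = γ * C ^ 2 * r * (ε * SZ) := by ring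
    have h7 : ε * (γ * C ^ 2 * P) = γ * C ^ 2 * (ε * P) := by ring
    have h5 : ε * (γ * C ^ 2 * P) ≤ ε * T := by linarith
    exact le_of_mul_le_mul_left h5 hε0
  -- main quadratic identities
  have hA1 : A z - bδ = (A xhat - bδ) + A v := by
    rw [hvdef, map_sub]; abel
  have hId : 2⁻¹ * ‖A z - bδ‖ ^ 2
      = 2⁻¹ * ‖A xhat - bδ‖ ^ 2 + ⟪A xhat - bδ, A v⟫ + 2⁻¹ * ‖A v‖ ^ 2 := by
    rw [hA1, norm_add_sq_real]; ring
  have hInner : ⟪ContinuousLinearMap.adjoint A (A xhat - bδ) + αδ • dhat, v⟫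
      = ⟪A xhat - bδ, A v⟫ + αδ * ⟪dhat, v⟫ := by
    rw [inner_add_left, ContinuousLinearMap.adjoint_inner_left, real_inner_smul_left]
  -- final assembly
  rw [hId, hInner]
  have hTexp : αδ * (∑ k, |z k|)
      = αδ * (∑ k, |xhat k|) + αδ * ⟪dhat, v⟫ + αδ * T := by
    rw [hTdef]; ring
  have hfin1 : γ * αδ * infDist z Xhat ^ 2
      ≤ γ * C ^ 2 * αδ * ‖A v‖ ^ 2 + αδ * (γ * C ^ 2 * P) := by
    have h1 := mul_le_mul_of_nonneg_left hdist2 (by positivity : (0:ℝ) ≤ γ * αδ)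
    have h2 : γ * αδ * (C ^ 2 * (‖A v‖ ^ 2 + P))
        = γ * C ^ 2 * αδ * ‖A v‖ ^ 2 + αδ * (γ * C ^ 2 * P) := by ring
    linarith
  have hfin2 : γ * C ^ 2 * αδ * ‖A v‖ ^ 2 ≤ γ * C ^ 2 * 2⁻¹ * ‖A v‖ ^ 2 := by
    have h1 : αδ * (γ * C ^ 2 * ‖A v‖ ^ 2) ≤ 2⁻¹ * (γ * C ^ 2 * ‖A v‖ ^ 2) :=
      mul_le_mul_of_nonneg_right hα2.le (by positivity)
    have h2 : αδ * (γ * C ^ 2 * ‖A v‖ ^ 2) = γ * C ^ 2 * αδ * ‖A v‖ ^ 2 := by ring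
    have h3 : 2⁻¹ * (γ * C ^ 2 * ‖A v‖ ^ 2) = γ * C ^ 2 * 2⁻¹ * ‖A v‖ ^ 2 := by ring
    linarith
  have hfin3 : αδ * (γ * C ^ 2 * P) ≤ αδ * T := mul_le_mul_of_nonneg_left hPT hα.le
  have hhalf2 : γ * ‖A v‖ ^ 2 + γ * C ^ 2 * 2⁻¹ * ‖A v‖ ^ 2 = 2⁻¹ * ‖A v‖ ^ 2 := by
    linear_combination (‖A v‖ ^ 2 / 2) * hγsum
  linarith [hfin1, hfin2, hfin3, hTexp, hhalf2]
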